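/- Let f : ℝⁿ → ℝ be differentiable at x, ψ : ℝⁿ → ℝ ∪ {+∞} convex, proper, and closed with x ∈ dom ψ, and let H be a symmetric positive definite n×n matrix with smallest eigenvalue m > 0. If d* is a minimizer of Q(d) = ∇f(x)ᵀd + (1/2)dᵀHd + ψ(x+d) − ψ(x), then Q(d*) ≤ −(1/2)(d*)ᵀH d* ≤ −(m/2)‖d*‖². -/

import Mathlib

/-
Setting: minimize F = f + ψ over ℝⁿ (modeled as `EuclideanSpace ℝ (Fin n)`), where
f : ℝⁿ → ℝ is smooth and ψ : ℝⁿ → ℝ ∪ {+∞} (modeled as `EReal`-valued, never ⊥)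
is convex, proper and closed.  The quadratic model at x with symmetric operator H is
Q(d) = ⟪∇f(x), d⟫ + (1/2)⟪H d, d⟫ + ψ(x+d) − ψ(x), and Δ(d) = ⟪∇f(x), d⟫ + ψ(x+d) − ψ(x).
-/

open scoped RealInnerProductSpace
open Set Filter Topology

noncomputable section

/-- Convexity for extended-real-valued functions (values in ℝ ∪ {±∞}). -/
def ConvexE {n : ℕ} (g : EuclideanSpace ℝ (Fin n) → EReal) : Prop :=
  ∀ x y : EuclideanSpace ℝ (Fin n), ∀ a b : ℝ, 0 ≤ a → 0 ≤ b → a + b = 1 →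
    g (a • x + b • y) ≤ (a : EReal) * g x + (b : EReal) * g y

/-- ψ is proper: it never takes the value −∞ (its values lie in ℝ ∪ {+∞})
and it is finite somewhere. -/
def ProperPsi {n : ℕ} (ψ : EuclideanSpace ℝ (Fin n) → EReal) : Prop :=
  (∀ x, ψ x ≠ ⊥) ∧ ∃ x, ψ x ≠ ⊤

/-- ψ is closed, i.e. lower semicontinuous. -/
def ClosedPsi {n : ℕ} (ψ : EuclideanSpace ℝ (Fin n) → EReal) : Prop :=
  LowerSemicontinuous ψ

/-- H is a symmetric (self-adjoint) linear operator. -/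
def SymmCLM {n : ℕ} (H : EuclideanSpace ℝ (Fin n) →L[ℝ] EuclideanSpace ℝ (Fin n)) : Prop :=
  ∀ u v, ⟪H u, v⟫ = ⟪u, H v⟫

/-- m is the smallest eigenvalue of the symmetric operator H
(characterized as the minimum of the Rayleigh quotient over the unit sphere). -/
def IsSmallestEigenvalue {n : ℕ} (H : EuclideanSpace ℝ (Fin n) →L[ℝ] EuclideanSpace ℝ (Fin n))
    (m : ℝ) : Prop :=
  IsLeast {r : ℝ | ∃ u : EuclideanSpace ℝ (Fin n), ‖u‖ = 1 ∧ r = ⟪H u, u⟫} m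

/-- The objective F = f + ψ (extended-real-valued). -/
def Fm {n : ℕ} (f : EuclideanSpace ℝ (Fin n) → ℝ) (ψ : EuclideanSpace ℝ (Fin n) → EReal)
    (x : EuclideanSpace ℝ (Fin n)) : EReal :=
  (f x : EReal) + ψ x

/-- The quadratic model Q(d) = ∇f(x)ᵀd + (1/2)dᵀHd + ψ(x+d) − ψ(x). -/
def Qm {n : ℕ} (f : EuclideanSpace ℝ (Fin n) → ℝ) (ψ : EuclideanSpace ℝ (Fin n) → EReal)
    (H : EuclideanSpace ℝ (Fin n) →L[ℝ] EuclideanSpace ℝ (Fin n))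
    (x d : EuclideanSpace ℝ (Fin n)) : EReal :=
  ((⟪gradient f x, d⟫ + 1 / 2 * ⟪H d, d⟫ : ℝ) : EReal) + ψ (x + d) - ψ x

/-- Δ(d) = ∇f(x)ᵀd + ψ(x+d) − ψ(x). -/
def Dm {n : ℕ} (f : EuclideanSpace ℝ (Fin n) → ℝ) (ψ : EuclideanSpace ℝ (Fin n) → EReal)
    (x d : EuclideanSpace ℝ (Fin n)) : EReal :=
  ((⟪gradient f x, d⟫ : ℝ) : EReal) + ψ (x + d) - ψ x

/-- g is σ-strongly convex: g − (σ/2)‖·‖² is convex. -/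
def StrongConvexE {n : ℕ} (σ : ℝ) (g : EuclideanSpace ℝ (Fin n) → EReal) : Prop :=
  ConvexE (fun d => g d - ((σ / 2 * ‖d‖ ^ 2 : ℝ) : EReal))

/-- The solution set Ω = argmin F. -/
def SolSet {n : ℕ} (f : EuclideanSpace ℝ (Fin n) → ℝ)
    (ψ : EuclideanSpace ℝ (Fin n) → EReal) : Set (EuclideanSpace ℝ (Fin n)) :=
  {y | ∀ z, Fm f ψ y ≤ Fm f ψ z}

/-- With H symmetric positive definite with smallest eigenvalue m > 0,
if d* minimizes Q, then Q(d*) ≤ −(1/2)(d*)ᵀHd* ≤ −(m/2)‖d*‖². -/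
theorem Q_value_bound_at_minimizer {n : ℕ}
    (f : EuclideanSpace ℝ (Fin n) → ℝ) (ψ : EuclideanSpace ℝ (Fin n) → EReal)
    (H : EuclideanSpace ℝ (Fin n) →L[ℝ] EuclideanSpace ℝ (Fin n))
    (x dstar : EuclideanSpace ℝ (Fin n)) (m : ℝ)
    (hf : DifferentiableAt ℝ f x)
    (hψconv : ConvexE ψ) (hψproper : ProperPsi ψ) (hψclosed : ClosedPsi ψ)
    (hdom : ψ x ≠ ⊤)
    (hH : SymmCLM H)
    (hHpd : ∀ e : EuclideanSpace ℝ (Fin n), e ≠ 0 → 0 < ⟪H e, e⟫)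
    (hm : IsSmallestEigenvalue H m) (hm0 : 0 < m)
    (hdstar : ∀ e, Qm f ψ H x dstar ≤ Qm f ψ H x e) :
    Qm f ψ H x dstar ≤ ((-(1 / 2) * ⟪H dstar, dstar⟫ : ℝ) : EReal) ∧
      -(1 / 2) * ⟪H dstar, dstar⟫ ≤ -(m / 2) * ‖dstar‖ ^ 2 := by
  obtain ⟨hbot, -⟩ := hψproper
  set g := gradient f x with hg
  set q : ℝ := ⟪H dstar, dstar⟫ with hq
  obtain ⟨r, hr⟩ : ∃ r : ℝ, ψ x = (r : EReal) :=
    ⟨(ψ x).toReal, (EReal.coe_toReal hdom (hbot x)).symm⟩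
  -- second inequality
  have hineq2 : -(1 / 2) * q ≤ -(m / 2) * ‖dstar‖ ^ 2 := by
    rcases eq_or_ne dstar 0 with h0 | h0
    · simp [hq, h0]
    · have hn0 : (0 : ℝ) < ‖dstar‖ := norm_pos_iff.mpr h0
      set u : EuclideanSpace ℝ (Fin n) := ‖dstar‖⁻¹ • dstar with hu
      have hun : ‖u‖ = 1 := by
        rw [hu, norm_smul, norm_inv, norm_norm, inv_mul_cancel₀ hn0.ne']
      have hmu : m ≤ ⟪H u, u⟫ := hm.2 ⟨u, hun, rfl⟩
      have hHu : ⟪H u, u⟫ = ‖dstar‖⁻¹ ^ 2 * q := by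
        rw [hu, map_smul, real_inner_smul_left, real_inner_smul_right, hq]; ring
      rw [hHu] at hmu
      have h2 : m * ‖dstar‖ ^ 2 ≤ q := by
        have := mul_le_mul_of_nonneg_right hmu (sq_nonneg ‖dstar‖)
        calc m * ‖dstar‖ ^ 2 ≤ ‖dstar‖⁻¹ ^ 2 * q * ‖dstar‖ ^ 2 := this
          _ = q := by field_simp
      linarith
  -- Q(0) = 0
  have hQ0 : Qm f ψ H x 0 = 0 := by
    simp only [Qm, inner_zero_right, add_zero, hr]
    norm_num
  have hQle0 : Qm f ψ H x dstar ≤ 0 := hQ0 ▸ hdstar 0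
  rcases eq_or_ne dstar 0 with h0 | h0
  · have hqz : q = 0 := by rw [hq, h0]; simp
    constructor
    · rw [h0, hQ0, hqz]
      norm_num
    · exact hineq2
  · have hq0 : 0 < q := hHpd dstar h0
    -- ψ(x+dstar) is real
    have hstop : ψ (x + dstar) ≠ ⊤ := by
      intro htop
      have : Qm f ψ H x dstar = ⊤ := by
        rw [Qm, htop, hr, EReal.add_top_of_ne_bot (EReal.coe_ne_bot _), EReal.top_sub_coe]
      rw [this] at hQle0
      exact absurd hQle0 (by simp)
    obtain ⟨s, hs⟩ : ∃ s : ℝ, ψ (x + dstar) = (s : EReal) :=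
      ⟨(ψ (x + dstar)).toReal, (EReal.coe_toReal hstop (hbot _)).symm⟩
    have hQd : Qm f ψ H x dstar = ((⟪g, dstar⟫ + 1 / 2 * q + s - r : ℝ) : EReal) := by
      rw [Qm, hr, hs, ← hg, ← hq, ← EReal.coe_add, ← EReal.coe_sub]
    set Δ : ℝ := ⟪g, dstar⟫ + s - r with hΔdef
    have key : ∀ t : ℝ, 0 < t → t < 1 → Δ ≤ -((1 + t) * q / 2) := by
      intro t ht ht1
      have h1t : (0 : ℝ) < 1 - t := by linarith
      have hconv := hψconv (x + dstar) x t (1 - t) ht.le h1t.le (by ring)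
      have hpt : t • (x + dstar) + (1 - t) • x = x + t • dstar := by module
      rw [hpt, hs, hr] at hconv
      have hconv' : ψ (x + t • dstar) ≤ ((t * s + (1 - t) * r : ℝ) : EReal) := by
        rw [EReal.coe_add, EReal.coe_mul, EReal.coe_mul]; exact hconv
      have hQt : Qm f ψ H x (t • dstar) ≤
          ((t * ⟪g, dstar⟫ + 1 / 2 * (t ^ 2 * q) + (t * s + (1 - t) * r) - r : ℝ) : EReal) := by
        rw [Qm, hr]
        have hin : ⟪gradient f x, t • dstar⟫ = t * ⟪g, dstar⟫ := by
          rw [← hg, real_inner_smul_right]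
        have hHt : ⟪H (t • dstar), t • dstar⟫ = t ^ 2 * q := by
          rw [map_smul, real_inner_smul_left, real_inner_smul_right, hq]; ring
        rw [hin, hHt, show ((t * ⟪g, dstar⟫ + 1 / 2 * (t ^ 2 * q) + (t * s + (1 - t) * r) - r
          : ℝ) : EReal) = ((t * ⟪g, dstar⟫ + 1 / 2 * (t ^ 2 * q) : ℝ) : EReal)
          + ((t * s + (1 - t) * r : ℝ) : EReal) - ((r : ℝ) : EReal) by
            rw [← EReal.coe_add, ← EReal.coe_sub]]
        exact EReal.sub_le_sub (add_le_add le_rfl hconv') le_rfl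
      have hchain : ((⟪g, dstar⟫ + 1 / 2 * q + s - r : ℝ) : EReal) ≤
          ((t * ⟪g, dstar⟫ + 1 / 2 * (t ^ 2 * q) + (t * s + (1 - t) * r) - r : ℝ) : EReal) :=
        hQd ▸ le_trans (hdstar (t • dstar)) hQt
      have hreal := EReal.coe_le_coe_iff.mp hchain
      have h2 : (1 - t) * Δ ≤ (1 - t) * (-((1 + t) * q / 2)) := by nlinarith [hreal]
      exact le_of_mul_le_mul_left h2 h1t
    have hΔ : Δ ≤ -q := by
      by_contra hcon
      push_neg at hcon
      set ε : ℝ := Δ + q with hε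
      have hε0 : 0 < ε := by linarith
      set t : ℝ := max (1 / 2) (1 - ε / q) with htdef
      have ht0 : 0 < t := lt_of_lt_of_le (by norm_num) (le_max_left _ _)
      have ht1 : t < 1 := by
        apply max_lt (by norm_num)
        have : 0 < ε / q := div_pos hε0 hq0
        linarith
      have h1t : 1 - t ≤ ε / q := by
        have := le_max_right (1 / 2 : ℝ) (1 - ε / q)
        linarith
      have hk := key t ht0 ht1
      have : (1 - t) * q ≤ ε := by
        calc (1 - t) * q ≤ (ε / q) * q := by
              apply mul_le_mul_of_nonneg_right h1t hq0.le
          _ = ε := by field_simp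
      nlinarith [hk]
    refine ⟨?_, hineq2⟩
    rw [hQd, EReal.coe_le_coe_iff]
    linarith
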